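/- For any balanced dyadic rational x₀ = k/2^n in [0,1] with D_n(x₀) = 0 (equal numbers of 0 and 1 bits among the first n binary digits), the Takagi function satisfies τ(x₀ + y/2^n) = τ(x₀) + τ(y)/2^n for all y in [0,1]. -/

import Mathlib

open scoped BigOperators

/-- Distance from a real number to the nearest integer. -/
noncomputable def nearestDist (t : ℝ) : ℝ := |t - round t|

/-- The Takagi function. -/
noncomputable def takagi (x : ℝ) : ℝ := ∑' n : ℕ, (1 / 2 ^ n) * nearestDist (2 ^ n * x)

/-- Partial Takagi function of level `n`. -/
noncomputable def takagiPartial (n : ℕ) (x : ℝ) : ℝ :=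
  ∑ j ∈ Finset.range n, (1 / 2 ^ j) * nearestDist (2 ^ j * x)

/-- The symmetric tent map. -/
noncomputable def tent (x : ℝ) : ℝ := if x ≤ 1 / 2 then 2 * x else 2 - 2 * x

lemma nearestDist_natCast_add (a : ℕ) (t : ℝ) : nearestDist ((a : ℝ) + t) = nearestDist t := by
  have h : round ((a : ℝ) + t) = (a : ℤ) + round t := by
    have := round_intCast_add t (a : ℤ); push_cast at this ⊢; linarith [this]
  unfold nearestDist
  rw [h]; push_cast; ring_nf

lemma nearestDist_natCast (a : ℕ) : nearestDist (a : ℝ) = 0 := by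
  simp [nearestDist]

lemma nearestDist_nonneg (t : ℝ) : 0 ≤ nearestDist t := abs_nonneg _

lemma nearestDist_le_half (t : ℝ) : nearestDist t ≤ 1 / 2 := abs_sub_round t

lemma nearestDist_of_le_half {u : ℝ} (h0 : 0 ≤ u) (h1 : u ≤ 1 / 2) : nearestDist u = u := by
  rcases lt_or_eq_of_le h1 with h | h
  · have hr : round u = 0 := by
      rw [round_eq, Int.floor_eq_zero_iff, Set.mem_Ico]
      constructor <;> [linarith; linarith]
    simp [nearestDist, hr, abs_of_nonneg h0]
  · rw [h]
    norm_num [nearestDist, round_eq]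

lemma nearestDist_of_ge_half {u : ℝ} (h0 : 1 / 2 ≤ u) (h1 : u ≤ 1) : nearestDist u = 1 - u := by
  have hr : round u = 1 := by
    rw [round_eq]
    have : ⌊u + 1/2⌋ = (1 : ℤ) := by
      apply Int.floor_eq_iff.mpr
      constructor <;> [push_cast; push_cast] <;> linarith
    exact this
  rw [nearestDist, hr]
  rw [abs_of_nonpos (by push_cast; linarith)]
  push_cast; ring

lemma takagi_summable (x : ℝ) :
    Summable fun m : ℕ => (1 / 2 ^ m : ℝ) * nearestDist (2 ^ m * x) := by
  refine Summable.of_nonneg_of_le (fun m => mul_nonneg (by positivity) (nearestDist_nonneg _)) (fun m => ?_) summable_geometric_two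
  have h1 : nearestDist (2 ^ m * x) ≤ 1 := (nearestDist_le_half _).trans (by norm_num)
  have := mul_le_mul_of_nonneg_left h1 (by positivity : (0:ℝ) ≤ 1 / 2 ^ m)
  simpa [div_pow] using this

lemma sum_bits_eq_digitSum : ∀ (n k : ℕ), k < 2 ^ n →
    (∑ j ∈ Finset.range n, k / 2 ^ j % 2) = (Nat.digits 2 k).sum := by
  intro n
  induction n with
  | zero => intro k hk; interval_cases k; simp
  | succ n ih =>
    intro k hk
    have hk2 : k / 2 < 2 ^ n := by
      rw [Nat.div_lt_iff_lt_mul (by norm_num)]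
      calc k < 2 ^ (n+1) := hk
        _ = 2 ^ n * 2 := by ring
    have e1 : ∀ j, k / 2 ^ (j+1) % 2 = (k / 2) / 2 ^ j % 2 := fun j => by
      rw [pow_succ', ← Nat.div_div_eq_div_mul]
    rw [Finset.sum_range_succ']
    simp only [e1, pow_zero, Nat.div_one]
    rw [ih (k/2) hk2]
    rcases Nat.eq_zero_or_pos k with h0 | h0
    · simp [h0]
    · rw [Nat.digits_def' (by norm_num : 1 < 2) h0, List.sum_cons]
      ring

lemma partial_term (n k m : ℕ) (hm : m < n) (hk : k < 2 ^ n) (y : ℝ)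
    (hy0 : 0 ≤ y) (hy1 : y ≤ 1) :
    (1 / 2 ^ m : ℝ) * nearestDist (2 ^ m * ((k : ℝ) / 2 ^ n + y / 2 ^ n))
      = (1 / 2 ^ m : ℝ) * nearestDist (2 ^ m * ((k : ℝ) / 2 ^ n))
        + (1 - 2 * (k / 2 ^ (n - m - 1) % 2 : ℕ)) * (y / 2 ^ n) := by
  obtain ⟨d, rfl⟩ : ∃ d, n = m + (d + 1) := ⟨n - m - 1, by omega⟩
  have hd : m + (d + 1) - m - 1 = d := by omega
  rw [hd]
  set a := k / 2 ^ (d+1) with ha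
  set r := k % 2 ^ (d+1) with hrdef
  have hr : r < 2 ^ (d+1) := Nat.mod_lt _ (by positivity)
  have hkr : k = 2 ^ (d+1) * a + r := (Nat.div_add_mod k (2 ^ (d+1))).symm
  have hkR : (k : ℝ) = 2 ^ (d+1) * (a : ℝ) + (r : ℝ) := by exact_mod_cast hkr
  have hbit : k / 2 ^ d % 2 = r / 2 ^ d := by
    have h1 : k / 2 ^ d = 2 * a + r / 2 ^ d := by
      rw [hkr, pow_succ, show (2^d*2)*a + r = 2^d*(2*a) + r by ring,
        Nat.mul_add_div (by positivity)]
    rw [h1, Nat.mul_add_mod]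
    exact Nat.mod_eq_of_lt ((Nat.div_lt_iff_lt_mul (by positivity)).mpr
      (by rw [pow_succ] at hr; omega))
  have hp1 : (0:ℝ) < 2 ^ (d+1) := by positivity
  have e1 : (2:ℝ) ^ m * ((k : ℝ) / 2 ^ (m+(d+1)) + y / 2 ^ (m+(d+1)))
      = (a : ℝ) + ((r : ℝ) + y) / 2 ^ (d+1) := by
    rw [pow_add, hkR]; field_simp; ring
  have e0 : (2:ℝ) ^ m * ((k : ℝ) / 2 ^ (m+(d+1)))
      = (a : ℝ) + (r : ℝ) / 2 ^ (d+1) := by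
    rw [pow_add, hkR]; field_simp
  rw [e1, e0, nearestDist_natCast_add, nearestDist_natCast_add]
  have h2d : (2:ℝ) ^ (d+1) = 2 * 2 ^ d := by rw [pow_succ]; ring
  by_cases hb : r < 2 ^ d
  · have hbR : (r : ℝ) + 1 ≤ 2 ^ d := by exact_mod_cast hb
    have hbit0 : r / 2 ^ d = 0 := Nat.div_eq_of_lt hb
    rw [hbit, hbit0]
    have hu1 : ((r:ℝ) + y) / 2 ^ (d+1) ≤ 1/2 := by
      rw [div_le_iff₀ hp1, h2d]; nlinarith
    have hu0 : (0:ℝ) ≤ ((r:ℝ) + y) / 2 ^ (d+1) := by positivity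
    have hv1 : (r:ℝ) / 2 ^ (d+1) ≤ 1/2 := by
      rw [div_le_iff₀ hp1, h2d]; nlinarith
    have hv0 : (0:ℝ) ≤ (r:ℝ) / 2 ^ (d+1) := by positivity
    rw [nearestDist_of_le_half hu0 hu1, nearestDist_of_le_half hv0 hv1]
    push_cast
    rw [pow_add]
    field_simp
    ring
  · push_neg at hb
    have hbR : (2:ℝ) ^ d ≤ (r : ℝ) := by exact_mod_cast hb
    have hrR : (r : ℝ) + 1 ≤ 2 ^ (d+1) := by exact_mod_cast hr
    have hbit1 : r / 2 ^ d = 1 := by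
      have hle : 1 ≤ r / 2 ^ d := (Nat.le_div_iff_mul_le (by positivity)).mpr (by omega)
      have hlt : r / 2 ^ d < 2 := (Nat.div_lt_iff_lt_mul (by positivity)).mpr
        (by rw [pow_succ] at hr; omega)
      omega
    rw [hbit, hbit1]
    have hu0 : (1:ℝ)/2 ≤ ((r:ℝ) + y) / 2 ^ (d+1) := by
      rw [le_div_iff₀ hp1, h2d]; nlinarith
    have hu1 : ((r:ℝ) + y) / 2 ^ (d+1) ≤ 1 := by
      rw [div_le_one hp1]; linarith
    have hv0 : (1:ℝ)/2 ≤ (r:ℝ) / 2 ^ (d+1) := by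
      rw [le_div_iff₀ hp1, h2d]; nlinarith
    have hv1 : (r:ℝ) / 2 ^ (d+1) ≤ 1 := by
      rw [div_le_one hp1]; linarith
    rw [nearestDist_of_ge_half hu0 hu1, nearestDist_of_ge_half hv0 hv1]
    push_cast
    rw [pow_add]
    field_simp
    ring

theorem takagi_balanced_self_affine (n k : ℕ) (hk : k < 2 ^ n)
    (hbal : (n : ℤ) = 2 * ((Nat.digits 2 k).sum : ℤ))
    (y : ℝ) (hy : y ∈ Set.Icc (0:ℝ) 1) :
    takagi ((k : ℝ) / 2 ^ n + y / 2 ^ n)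
      = takagi ((k : ℝ) / 2 ^ n) + takagi y / 2 ^ n := by
  obtain ⟨hy0, hy1⟩ := hy
  have hx := takagi_summable ((k : ℝ) / 2 ^ n + y / 2 ^ n)
  have hx0 := takagi_summable ((k : ℝ) / 2 ^ n)
  have split1 : takagi ((k : ℝ) / 2 ^ n + y / 2 ^ n)
      = takagiPartial n ((k : ℝ) / 2 ^ n + y / 2 ^ n) + takagi y / 2 ^ n := by
    conv_lhs => rw [takagi]
    rw [← hx.sum_add_tsum_nat_add n]
    congr 1
    have key : ∀ j : ℕ, (1 / 2 ^ (j + n) : ℝ) * nearestDist (2 ^ (j + n) * ((k : ℝ) / 2 ^ n + y / 2 ^ n))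
        = (1 / 2 ^ n) * ((1 / 2 ^ j) * nearestDist (2 ^ j * y)) := by
      intro j
      have e : (2:ℝ) ^ (j + n) * ((k : ℝ) / 2 ^ n + y / 2 ^ n)
          = ((2 ^ j * k : ℕ) : ℝ) + 2 ^ j * y := by
        push_cast; rw [pow_add]; field_simp
      rw [e, nearestDist_natCast_add, pow_add]
      ring
    rw [tsum_congr key, tsum_mul_left, takagi]
    ring
  have split0 : takagi ((k : ℝ) / 2 ^ n) = takagiPartial n ((k : ℝ) / 2 ^ n) := by
    conv_lhs => rw [takagi]
    rw [← hx0.sum_add_tsum_nat_add n]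
    have key : ∀ j : ℕ, (1 / 2 ^ (j + n) : ℝ) * nearestDist (2 ^ (j + n) * ((k : ℝ) / 2 ^ n)) = 0 := by
      intro j
      have e : (2:ℝ) ^ (j + n) * ((k : ℝ) / 2 ^ n) = ((2 ^ j * k : ℕ) : ℝ) := by
        push_cast; rw [pow_add]; field_simp
      rw [e, nearestDist_natCast, mul_zero]
    rw [tsum_congr key, tsum_zero, add_zero]
    rfl
  have hpartial : takagiPartial n ((k : ℝ) / 2 ^ n + y / 2 ^ n)
      = takagiPartial n ((k : ℝ) / 2 ^ n) := by
    unfold takagiPartial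
    rw [Finset.sum_congr rfl (fun m hm =>
      partial_term n k m (Finset.mem_range.mp hm) hk y hy0 hy1)]
    rw [Finset.sum_add_distrib, ← Finset.sum_mul]
    have hsum : ∑ m ∈ Finset.range n, ((1:ℝ) - 2 * (k / 2 ^ (n - m - 1) % 2 : ℕ)) = 0 := by
      have hnat : ∑ m ∈ Finset.range n, k / 2 ^ (n - m - 1) % 2 = (Nat.digits 2 k).sum := by
        rw [Finset.sum_congr rfl (fun m _ => by rw [show n - m - 1 = n - 1 - m by omega])]
        rw [Finset.sum_range_reflect (fun j => k / 2 ^ j % 2) n]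
        exact sum_bits_eq_digitSum n k hk
      have h1 : ∑ m ∈ Finset.range n, ((k / 2 ^ (n - m - 1) % 2 : ℕ) : ℝ)
          = ((Nat.digits 2 k).sum : ℝ) := by
        rw [← Nat.cast_sum, hnat]
      rw [Finset.sum_sub_distrib, ← Finset.mul_sum, h1, Finset.sum_const, Finset.card_range,
        nsmul_eq_mul, mul_one]
      have hb : (n : ℝ) = 2 * ((Nat.digits 2 k).sum : ℝ) := by exact_mod_cast hbal
      linarith
    rw [hsum, zero_mul, add_zero]
  rw [split1, hpartial, split0]
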